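/- Let G be a connected simple graph of order n having exactly k cut-edges, where 0 ≤ k ≤ n−1. Then the number of edges of G satisfies |E(G)| ≤ C(n−k, 2) + k, where C(m,2) = m(m−1)/2 denotes a binomial coefficient. -/

import Mathlib

open SimpleGraph

namespace Stmt5Aux
universe u
variable {V : Type u} {G : SimpleGraph V}

lemma succ_choose_two (m : ℕ) : (m+1).choose 2 = m.choose 2 + m := by
  rw [Nat.choose_succ_succ m 1, Nat.choose_one_right]
  show m + m.choose 2 = m.choose 2 + m
  omega

lemma choose_merge (a b : ℕ) : (a+1).choose 2 + (b+1).choose 2 ≤ (a+b+1).choose 2 := by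
  induction b with
  | zero => simp
  | succ b ih =>
    have e1 : a+(b+1)+1 = (a+b+1)+1 := by ring
    rw [e1, succ_choose_two (a+b+1), succ_choose_two (b+1)]
    omega

lemma reachable_of_mem_support : ∀ {a b x : V} (p : G.Walk a b), x ∈ p.support → G.Reachable a x := by
  intro a b x p
  induction p with
  | nil => intro h; simp at h; subst h; rfl
  | cons h q ih =>
    intro hx
    rw [SimpleGraph.Walk.support_cons, List.mem_cons] at hx
    rcases hx with rfl | hx
    · rfl
    · exact h.reachable.trans (ih hx)

lemma exists_lift {s : Set V} : ∀ {a b : V} (p : G.Walk a b),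
    (∀ x ∈ p.support, x ∈ s) → ∀ (ha : a ∈ s) (hb : b ∈ s),
    ∃ q : (G.induce s).Walk ⟨a, ha⟩ ⟨b, hb⟩,
      q.edges.map (Sym2.map (Subtype.val)) = p.edges ∧
      q.support.map Subtype.val = p.support := by
  intro a b p
  induction p with
  | nil => intro _ ha hb; exact ⟨.nil, by simp, by simp⟩
  | @cons a c b h q ih =>
    intro hs ha hb
    have hc : c ∈ s := hs c (by simp)
    obtain ⟨q', h1, h2⟩ := ih (fun x hx => hs x (by simp [hx])) hc hb
    refine ⟨.cons (show (G.induce s).Adj ⟨a, ha⟩ ⟨c, hc⟩ from h) q', by simp only [Walk.edges_cons, List.map_cons, h1, Sym2.map_pair_eq], by simp only [Walk.support_cons, List.map_cons, h2]⟩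

end Stmt5Aux

namespace Stmt5Aux
open SimpleGraph Walk

variable {V : Type u} {G : SimpleGraph V}

lemma list_tail_map {α β : Type*} (f : α → β) (l : List α) : (l.map f).tail = l.tail.map f := by
  cases l <;> simp

lemma side_connected {u v : V} (S : Set V)
    (hS : ∀ z, z ∈ S ↔ (G \ fromEdgeSet {s(u,v)}).Reachable u z) :
    (G.induce S).Connected := by
  rw [connected_iff]
  have huS : u ∈ S := (hS u).2 (Reachable.refl u)
  refine ⟨?_, ⟨⟨u, huS⟩⟩⟩
  rintro ⟨x, hx⟩ ⟨y, hy⟩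
  obtain ⟨p⟩ := (((hS x).1 hx).symm.trans ((hS y).1 hy))
  have hsupp : ∀ z ∈ p.support, z ∈ S :=
    fun z hz => (hS z).2 (((hS x).1 hx).trans (reachable_of_mem_support p hz))
  obtain ⟨q, -, -⟩ := exists_lift (G := G \ fromEdgeSet {s(u,v)}) p hsupp hx hy
  have hle : (G \ fromEdgeSet {s(u,v)}) ≤ G := sdiff_le
  exact Reachable.mono (fun a b hab => hle hab) ⟨q⟩

lemma side_bridge_iff {u v : V} (hb : G.IsBridge s(u,v)) (S : Set V)
    (hS : ∀ z, z ∈ S ↔ (G \ fromEdgeSet {s(u,v)}).Reachable u z) (x y : ↥S) :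
    (G.induce S).IsBridge s(x,y) ↔ G.IsBridge s(x.val, y.val) := by
  have hinj : Function.Injective (Subtype.val : ↥S → V) := Subtype.val_injective
  by_cases hxy : (G.induce S).Adj x y
  swap
  · have hr : (G.induce S).Reachable x y := (side_connected S hS).preconnected x y
    have hrG : G.Reachable x.val y.val := hr.map (SimpleGraph.Embedding.induce (G := G) S).toHom
    constructor
    · intro h; exact absurd ((h.reachable_iff_adj).mp hr) hxy
    · intro h; exact absurd ((h.reachable_iff_adj).mp hrG) hxy
  rw [isBridge_iff_adj_and_forall_cycle_notMem hxy,
    isBridge_iff_adj_and_forall_cycle_notMem (show s(x.val, y.val) ∈ G.edgeSet from hxy)]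
  constructor
  · intro hcyc
    intro w c hcyc' hmem
    have hne : s(u,v) ∉ c.edges := hb.notMem_edges_of_isCycle hcyc'
    have hGe : ∀ e ∈ c.edges, e ∈ (G \ fromEdgeSet {s(u,v)}).edgeSet := by
      intro e hin
      rw [edgeSet_sdiff, edgeSet_fromEdgeSet, edgeSet_sdiff_sdiff_isDiag]
      exact ⟨c.edges_subset_edgeSet hin,
        fun h' => hne (by rw [Set.mem_singleton_iff] at h'; rw [← h']; exact hin)⟩
    set c' := c.transfer _ hGe with hc'
    have hc'cyc : c'.IsCycle := hcyc'.transfer hGe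
    have hmem' : s(x.val, y.val) ∈ c'.edges := by rw [hc', Walk.edges_transfer]; exact hmem
    have hxs : (x : V) ∈ c'.support := Walk.fst_mem_support_of_mem_edges c' hmem'
    have hwS : w ∈ S :=
      (hS w).2 (((hS x).1 x.2).trans (reachable_of_mem_support c' hxs).symm)
    have hsupp : ∀ z ∈ c'.support, z ∈ S :=
      fun z hz => (hS z).2 (((hS w).1 hwS).trans (reachable_of_mem_support c' hz))
    obtain ⟨q, hq1, hq2⟩ := exists_lift (G := G \ fromEdgeSet {s(u,v)}) c' hsupp hwS hwS
    have hlen : q.length = c'.length := by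
      rw [← Walk.length_edges, ← Walk.length_edges, ← hq1, List.length_map]
    have hqcyc : q.IsCycle := by
      rw [Walk.isCycle_def] at hc'cyc ⊢
      refine ⟨⟨?_⟩, ?_, ?_⟩
      · have := hc'cyc.1.edges_nodup
        rw [← hq1] at this
        exact this.of_map _
      · intro hnil
        refine hc'cyc.2.1 (Walk.Nil.eq_nil (Walk.nil_iff_length_eq.mpr ?_))
        rw [← hlen, hnil]
        simp
      · have := hc'cyc.2.2
        rw [← hq2, list_tail_map] at this
        exact this.of_map _
    have hle0 : (G \ fromEdgeSet {s(u,v)}) ≤ G := sdiff_le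
    have hle' : ((G \ fromEdgeSet {s(u,v)}).induce S) ≤ (G.induce S) := by
      intro a b hab
      exact hle0 hab
    have hqmem : s(x, y) ∈ q.edges := by
      rw [← hq1] at hmem'
      obtain ⟨e0, he0, he0'⟩ := List.mem_map.mp hmem'
      have : e0 = s(x, y) := Sym2.map.injective hinj (by rw [he0']; simp)
      rwa [← this]
    refine hcyc (q.mapLe hle') ((mapLe_isCycle hle').mpr hqcyc) ?_
    rw [Walk.mapLe, Walk.edges_map]
    exact List.mem_map.mpr ⟨s(x,y), hqmem, by simp⟩
  · intro hcyc
    intro w c hcyc' hmem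
    have hcm : (c.map (SimpleGraph.Embedding.induce (G := G) S).toHom).IsCycle :=
      (map_isCycle_iff_of_injective (SimpleGraph.Embedding.induce (G := G) S).injective).mpr hcyc'
    refine hcyc (c.map (SimpleGraph.Embedding.induce (G := G) S).toHom) hcm ?_
    rw [Walk.edges_map]
    exact List.mem_map.mpr ⟨s(x,y), hmem, by simp⟩

end Stmt5Aux

namespace Stmt5Aux
open SimpleGraph Walk

lemma key : ∀ (k : ℕ) (V : Type u) [Fintype V] (G : SimpleGraph V),
    G.Connected → {e : Sym2 V | G.IsBridge e}.ncard = k →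
    k + 1 ≤ Fintype.card V ∧ G.edgeSet.ncard ≤ (Fintype.card V - k).choose 2 + k := by
  intro k
  induction k using Nat.strong_induction_on with
  | _ k IH =>
  intro V _ G hc hk
  classical
  rcases Nat.eq_zero_or_pos k with rfl | hkpos
  · have h1 : 1 ≤ Fintype.card V := Fintype.card_pos_iff.mpr hc.nonempty
    refine ⟨h1, ?_⟩
    simp only [Nat.sub_zero, Nat.add_zero]
    rw [Set.ncard_eq_toFinset_card']
    exact G.card_edgeFinset_le_card_choose_two
  · obtain ⟨e, he⟩ : {e : Sym2 V | G.IsBridge e}.Nonempty := by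
      apply Set.nonempty_of_ncard_ne_zero
      omega
    induction e using Sym2.ind with
    | _ u v =>
    have hb : G.IsBridge s(u,v) := he
    have huv : G.Adj u v := (hb.reachable_iff_adj).mp (hc.preconnected u v)
    have hnr : ¬ (G \ fromEdgeSet {s(u,v)}).Reachable u v := (isBridge_iff).mp hb
    have hswap : s(v,u) = s(u,v) := Sym2.eq_swap
    have hb' : G.IsBridge s(v,u) := by rwa [hswap]
    set S : Set V := {z | (G \ fromEdgeSet {s(u,v)}).Reachable u z} with hSdef0
    set T : Set V := {z | (G \ fromEdgeSet {s(v,u)}).Reachable v z} with hTdef0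
    have hSdef : ∀ z, z ∈ S ↔ (G \ fromEdgeSet {s(u,v)}).Reachable u z := fun z => Iff.rfl
    have hTdef : ∀ z, z ∈ T ↔ (G \ fromEdgeSet {s(v,u)}).Reachable v z := fun z => Iff.rfl
    have huS : u ∈ S := Reachable.refl u
    have hvT : v ∈ T := Reachable.refl v
    have hvS : v ∉ S := fun h => hnr h
    have huT : u ∉ T := by
      intro h
      have h' : (G \ fromEdgeSet {s(v,u)}).Reachable v u := h
      rw [hswap] at h'
      exact hnr h'.symm
    have hdisj : ∀ z, z ∈ S → z ∈ T → False := by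
      intro z h1 h2
      have h2' : (G \ fromEdgeSet {s(v,u)}).Reachable v z := h2
      rw [hswap] at h2'
      exact hnr ((h1 : (G \ fromEdgeSet {s(u,v)}).Reachable u z).trans h2'.symm)
    have hstep : ∀ a b : V, (a ∈ S ∨ a ∈ T) → G.Adj a b → (b ∈ S ∨ b ∈ T) := by
      intro a b ha hab
      by_cases hcase : s(a,b) = s(u,v)
      · rw [Sym2.eq_iff] at hcase
        rcases hcase with ⟨rfl, rfl⟩ | ⟨rfl, rfl⟩
        · right; exact hvT
        · left; exact huS
      · have hadj' : (G \ fromEdgeSet {s(u,v)}).Adj a b := by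
          rw [sdiff_adj]
          exact ⟨hab, by simp [fromEdgeSet_adj, hcase]⟩
        rcases ha with h | h
        · left
          exact (h : (G \ fromEdgeSet {s(u,v)}).Reachable u a).trans hadj'.reachable
        · right
          have hadj'' : (G \ fromEdgeSet {s(v,u)}).Adj a b := by rw [hswap]; exact hadj'
          exact (h : (G \ fromEdgeSet {s(v,u)}).Reachable v a).trans hadj''.reachable
    have hcov : ∀ z, z ∈ S ∨ z ∈ T := by
      have main : ∀ (a b : V) (p : G.Walk a b), (a ∈ S ∨ a ∈ T) → (b ∈ S ∨ b ∈ T) := by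
        intro a b p
        induction p with
        | nil => exact id
        | cons h q ih => exact fun hy => ih (hstep _ _ hy h)
      intro z
      obtain ⟨p⟩ := hc.preconnected u z
      exact main u z p (Or.inl huS)
    have hedge : ∀ a b : V, G.Adj a b → s(a,b) ≠ s(u,v) →
        (a ∈ S ∧ b ∈ S) ∨ (a ∈ T ∧ b ∈ T) := by
      intro a b hab hne
      have hadj' : (G \ fromEdgeSet {s(u,v)}).Adj a b := by
        rw [sdiff_adj]; exact ⟨hab, by simp [fromEdgeSet_adj, hne]⟩
      rcases hcov a with h | h
      · left
        exact ⟨h, (h : (G \ fromEdgeSet {s(u,v)}).Reachable u a).trans hadj'.reachable⟩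
      · right
        refine ⟨h, ?_⟩
        have hadj'' : (G \ fromEdgeSet {s(v,u)}).Adj a b := by rw [hswap]; exact hadj'
        exact (h : (G \ fromEdgeSet {s(v,u)}).Reachable v a).trans hadj''.reachable
    -- induced graphs
    have hcS : (G.induce S).Connected := side_connected S hSdef
    have hcT : (G.induce T).Connected := side_connected T hTdef
    have hbrS : ∀ x y : ↥S, ((G.induce S).IsBridge s(x,y) ↔ G.IsBridge s(x.val, y.val)) :=
      side_bridge_iff hb S hSdef
    have hbrT : ∀ x y : ↥T, ((G.induce T).IsBridge s(x,y) ↔ G.IsBridge s(x.val, y.val)) :=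
      side_bridge_iff hb' T hTdef
    -- helpers about images
    have hmemIm : ∀ (W : Set V) (A : Set (Sym2 ↥W)) (e' : Sym2 V),
        e' ∈ Sym2.map (Subtype.val) '' A → ∀ z ∈ e', z ∈ W := by
      rintro W A e' ⟨e0, -, rfl⟩ z hz
      rw [Sym2.mem_map] at hz
      obtain ⟨w, -, rfl⟩ := hz
      exact w.2
    have hnotmem : ∀ (A : Set (Sym2 ↥S)) (B : Set (Sym2 ↥T)),
        s(u,v) ∉ (Sym2.map Subtype.val '' A) ∪ (Sym2.map Subtype.val '' B) := by
      rintro A B (h | h)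
      · exact hvS (hmemIm S A _ h v (by simp))
      · exact huT (hmemIm T B _ h u (by simp))
    have hdisjIm : ∀ (A : Set (Sym2 ↥S)) (B : Set (Sym2 ↥T)),
        Disjoint (Sym2.map Subtype.val '' A) (Sym2.map Subtype.val '' B) := by
      intro A B
      rw [Set.disjoint_left]
      intro e' h1 h2
      have hz : ∃ z, z ∈ e' := by
        induction e' using Sym2.ind with | _ a b => exact ⟨a, by simp⟩
      obtain ⟨z, hz⟩ := hz
      exact hdisj z (hmemIm S A _ h1 z hz) (hmemIm T B _ h2 z hz)
    have him : ∀ (W : Set V) (e0 : Sym2 ↥W), e0 ∈ (G.induce W).edgeSet →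
        Sym2.map (Subtype.val) e0 ∈ G.edgeSet := by
      intro W e0
      induction e0 using Sym2.ind with
      | _ x y => intro h; simpa using h
    -- edge set decomposition
    have hEdec : G.edgeSet = insert s(u,v)
        ((Sym2.map Subtype.val '' (G.induce S).edgeSet) ∪
         (Sym2.map Subtype.val '' (G.induce T).edgeSet)) := by
      ext e'
      induction e' using Sym2.ind with
      | _ a b =>
      simp only [Set.mem_insert_iff, Set.mem_union, SimpleGraph.mem_edgeSet]
      constructor
      · intro hab
        by_cases hcase : s(a,b) = s(u,v)
        · exact Or.inl hcase
        · refine Or.inr ?_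
          rcases hedge a b hab hcase with ⟨h1, h2⟩ | ⟨h1, h2⟩
          · exact Or.inl ⟨s(⟨a,h1⟩,⟨b,h2⟩), hab, by simp⟩
          · exact Or.inr ⟨s(⟨a,h1⟩,⟨b,h2⟩), hab, by simp⟩
      · rintro (h | ⟨e0, he0, heq⟩ | ⟨e0, he0, heq⟩)
        · rw [← SimpleGraph.mem_edgeSet, h]; exact huv
        · rw [← SimpleGraph.mem_edgeSet, ← heq]; exact him S e0 he0
        · rw [← SimpleGraph.mem_edgeSet, ← heq]; exact him T e0 he0
    -- bridge set decomposition
    have hBdec : {e' : Sym2 V | G.IsBridge e'} = insert s(u,v)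
        ((Sym2.map Subtype.val '' {e0 | (G.induce S).IsBridge e0}) ∪
         (Sym2.map Subtype.val '' {e0 | (G.induce T).IsBridge e0})) := by
      ext e'
      induction e' using Sym2.ind with
      | _ a b =>
      simp only [Set.mem_insert_iff, Set.mem_union, Set.mem_setOf_eq]
      constructor
      · intro hbe
        by_cases hcase : s(a,b) = s(u,v)
        · exact Or.inl hcase
        · refine Or.inr ?_
          have hab : G.Adj a b := (hbe.reachable_iff_adj).mp (hc.preconnected a b)
          rcases hedge a b hab hcase with ⟨h1, h2⟩ | ⟨h1, h2⟩
          · exact Or.inl ⟨s(⟨a,h1⟩,⟨b,h2⟩), (hbrS ⟨a,h1⟩ ⟨b,h2⟩).mpr hbe, by simp⟩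
          · exact Or.inr ⟨s(⟨a,h1⟩,⟨b,h2⟩), (hbrT ⟨a,h1⟩ ⟨b,h2⟩).mpr hbe, by simp⟩
      · rintro (h | ⟨e0, he0, heq⟩ | ⟨e0, he0, heq⟩)
        · rw [h]; exact hb
        · rw [← heq]
          revert he0
          induction e0 using Sym2.ind with
          | _ x y => intro h0; rw [Sym2.map_pair_eq]; exact (hbrS x y).mp h0
        · rw [← heq]
          revert he0
          induction e0 using Sym2.ind with
          | _ x y => intro h0; rw [Sym2.map_pair_eq]; exact (hbrT x y).mp h0
    -- cardinalities
    have hinjmap : Function.Injective (Sym2.map (Subtype.val : ↥S → V)) :=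
      Sym2.map.injective Subtype.val_injective
    have hinjmapT : Function.Injective (Sym2.map (Subtype.val : ↥T → V)) :=
      Sym2.map.injective Subtype.val_injective
    haveI : Fintype ↥S := Fintype.ofFinite ↥S
    haveI : Fintype ↥T := Fintype.ofFinite ↥T
    have hcount : G.edgeSet.ncard =
        (G.induce S).edgeSet.ncard + (G.induce T).edgeSet.ncard + 1 := by
      rw [hEdec, Set.ncard_insert_of_notMem (hnotmem _ _) (Set.toFinite _),
        Set.ncard_union_eq (hdisjIm _ _) (Set.toFinite _) (Set.toFinite _),
        Set.ncard_image_of_injective _ hinjmap, Set.ncard_image_of_injective _ hinjmapT]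
    have hBcount : k = {e0 | (G.induce S).IsBridge e0}.ncard +
        {e0 | (G.induce T).IsBridge e0}.ncard + 1 := by
      rw [← hk, hBdec, Set.ncard_insert_of_notMem (hnotmem _ _) (Set.toFinite _),
        Set.ncard_union_eq (hdisjIm _ _) (Set.toFinite _) (Set.toFinite _),
        Set.ncard_image_of_injective _ hinjmap, Set.ncard_image_of_injective _ hinjmapT]
    have hcardS : Fintype.card ↥S = S.ncard := by
      rw [← Nat.card_coe_set_eq, Nat.card_eq_fintype_card]
    have hcardT : Fintype.card ↥T = T.ncard := by
      rw [← Nat.card_coe_set_eq, Nat.card_eq_fintype_card]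
    have hcardV : S.ncard + T.ncard = Fintype.card V := by
      have hd : Disjoint S T := by
        rw [Set.disjoint_left]; exact fun z h1 h2 => hdisj z h1 h2
      have hu : S ∪ T = Set.univ := Set.eq_univ_of_forall hcov
      rw [← Set.ncard_union_eq hd (Set.toFinite _) (Set.toFinite _), hu, Set.ncard_univ,
        Nat.card_eq_fintype_card]
    -- apply induction hypothesis
    set ks := {e0 | (G.induce S).IsBridge e0}.ncard with hks
    set kt := {e0 | (G.induce T).IsBridge e0}.ncard with hkt
    have IHS := IH ks (by omega) ↥S (G.induce S) hcS rfl
    have IHT := IH kt (by omega) ↥T (G.induce T) hcT rfl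
    obtain ⟨hS1, hS2⟩ := IHS
    obtain ⟨hT1, hT2⟩ := IHT
    rw [hcardS] at hS1 hS2
    rw [hcardT] at hT1 hT2
    constructor
    · omega
    · obtain ⟨a', ha'⟩ : ∃ a', S.ncard - ks = a' + 1 := ⟨S.ncard - ks - 1, by omega⟩
      obtain ⟨b', hb'2⟩ : ∃ b', T.ncard - kt = b' + 1 := ⟨T.ncard - kt - 1, by omega⟩
      rw [ha'] at hS2
      rw [hb'2] at hT2
      have hnk : Fintype.card V - k = a' + b' + 1 := by omega
      rw [hnk]
      have hm := choose_merge a' b'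
      omega

end Stmt5Aux

/-- A connected graph of order `n` with exactly `k` cut-edges has at most
`C(n-k, 2) + k` edges. -/
theorem stmt_5 {V : Type*} [Fintype V] (G : SimpleGraph V) (n k : ℕ)
    (hn : Fintype.card V = n) (hc : G.Connected)
    (hk : {e : Sym2 V | G.IsBridge e}.ncard = k) (hkn : k ≤ n - 1) :
    G.edgeSet.ncard ≤ (n - k).choose 2 + k := by
  subst hn
  exact (Stmt5Aux.key k V G hc hk).2
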